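/- (Multivariate influence of sample weights.) For each training index i and any function f : E → ℝ differentiable at θ*, the partial derivative of ε ↦ f(θ(ε)) at ε = 0 in the i-th coordinate equals ∂/∂ε_i f(θ(ε))|_{ε=0} = −⟨∇f(θ*), H⁻¹(∇ℓ_i(θ*))⟩. -/

import Mathlib

open scoped BigOperators

/-- multivariate influence of sample weights: if `θ(ε)` is a critical point
of the weighted empirical risk `Σᵢ (1/n + εᵢ)·ℓᵢ` for all `ε` near `0 ∈ ℝⁿ`, `θ` is
differentiable at `0` with `θ(0) = θ*`, and the Hessian `H = ∇²L(θ*)` of the empirical risk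
`L = (1/n)·Σᵢ ℓᵢ` is invertible, then for any `f` differentiable at `θ*` and any index `i`,
`∂/∂εᵢ f(θ(ε))|₀ = −⟨∇f(θ*), H⁻¹(∇ℓᵢ(θ*))⟩`. -/
theorem multivariate_influence
    {E : Type*} [NormedAddCommGroup E] [InnerProductSpace ℝ E] [FiniteDimensional ℝ E]
    (n : ℕ) (hn : 1 ≤ n) (ℓ : Fin n → E → ℝ) (hℓ : ∀ i, ContDiff ℝ 2 (ℓ i))
    (θ : (Fin n → ℝ) → E) (θs : E) (hθ0 : θ 0 = θs) (hθ : DifferentiableAt ℝ θ 0)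
    (H : E ≃L[ℝ] E)
    (hH : (H : E →L[ℝ] E) =
      fderiv ℝ (gradient (fun w => (1 / n : ℝ) * ∑ i, ℓ i w)) θs)
    (hcrit : ∀ᶠ ε in nhds (0 : Fin n → ℝ),
      ∑ i, ((1 / n : ℝ) + ε i) • gradient (ℓ i) (θ ε) = 0)
    (f : E → ℝ) (hf : DifferentiableAt ℝ f θs) (i : Fin n) :
    fderiv ℝ (fun ε => f (θ ε)) 0 (Pi.single i 1) =
      -(@inner ℝ E _ (gradient f θs) (H.symm (gradient (ℓ i) θs))) := by
  classical
  set D := fderiv ℝ θ 0 with hD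
  set v : Fin n → ℝ := Pi.single i 1 with hv
  set G : Fin n → E → E := fun j => gradient (ℓ j) with hGdef
  -- each gradient is C¹, hence differentiable
  let T : StrongDual ℝ E →L[ℝ] E :=
    { toFun := fun y => (InnerProductSpace.toDual ℝ E).symm y
      map_add' := fun a b => map_add _ a b
      map_smul' := fun r a => by
        simp only [RingHom.id_apply]
        rw [show r • a = (starRingEnd ℝ) r • a by simp [starRingEnd_apply]]
        exact map_smulₛₗ ((InnerProductSpace.toDual ℝ E).symm.toLinearEquiv) _ _
      cont := (InnerProductSpace.toDual ℝ E).symm.continuous }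
  have hGc : ∀ j, ContDiff ℝ 1 (G j) := by
    intro j
    have h1 : ContDiff ℝ 1 (fderiv ℝ (ℓ j)) :=
      (hℓ j).fderiv_right (by norm_num)
    exact (T.contDiff).comp h1
  have hGd : ∀ j x, DifferentiableAt ℝ (G j) x := fun j x =>
    ((hGc j).differentiable one_ne_zero).differentiableAt
  have hℓd : ∀ j x, DifferentiableAt ℝ (ℓ j) x := fun j x =>
    ((hℓ j).differentiable (by norm_num)).differentiableAt
  -- gradient of the empirical risk is the average of gradients
  have hLgrad : gradient (fun w => (1 / n : ℝ) * ∑ j, ℓ j w)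
      = fun x => (1 / n : ℝ) • ∑ j, G j x := by
    funext x
    have hsum : DifferentiableAt ℝ (fun w => ∑ j, ℓ j w) x :=
      DifferentiableAt.fun_sum fun j _ => hℓd j x
    have h1 : fderiv ℝ (fun w => (1 / n : ℝ) * ∑ j, ℓ j w) x
        = (1 / n : ℝ) • ∑ j, fderiv ℝ (ℓ j) x := by
      rw [fderiv_const_mul hsum, fderiv_fun_sum fun j _ => hℓd j x]
    show (InnerProductSpace.toDual ℝ E).symm _ = _
    rw [h1, map_smul, map_sum]
    rfl
  -- the Hessian as a combination of per-sample Hessians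
  have hH' : (H : E →L[ℝ] E) = (1 / n : ℝ) • ∑ j, fderiv ℝ (G j) θs := by
    rw [hH, hLgrad]
    exact HasFDerivAt.fderiv
      ((HasFDerivAt.fun_sum fun j _ => (hGd j θs).hasFDerivAt).fun_const_smul (1 / n : ℝ))
  -- the derivative of the first-order condition
  have hFj : ∀ j, HasFDerivAt (fun ε => G j (θ ε)) ((fderiv ℝ (G j) θs).comp D) 0 := by
    intro j
    have h1 : HasFDerivAt (G j) (fderiv ℝ (G j) θs) (θ 0) := by
      rw [hθ0]; exact (hGd j θs).hasFDerivAt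
    exact h1.comp 0 hθ.hasFDerivAt
  have hcj : ∀ j : Fin n, HasFDerivAt (fun ε : Fin n → ℝ => (1 / n : ℝ) + ε j)
      (ContinuousLinearMap.proj j : (Fin n → ℝ) →L[ℝ] ℝ) 0 :=
    fun j => by
      have h0 : HasFDerivAt (fun ε : Fin n → ℝ => ε j)
          (ContinuousLinearMap.proj j : (Fin n → ℝ) →L[ℝ] ℝ) (0 : Fin n → ℝ) :=
        (ContinuousLinearMap.proj j : (Fin n → ℝ) →L[ℝ] ℝ).hasFDerivAt
      exact h0.const_add _
  have hterm : ∀ j : Fin n, HasFDerivAt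
      (fun ε : Fin n → ℝ => ((1 / n : ℝ) + ε j) • G j (θ ε))
      (((1 / n : ℝ) + (0 : Fin n → ℝ) j) • ((fderiv ℝ (G j) θs).comp D)
        + (ContinuousLinearMap.proj j : (Fin n → ℝ) →L[ℝ] ℝ).smulRight (G j (θ 0))) 0 :=
    fun j => (hcj j).smul (hFj j)
  have hg : HasFDerivAt (fun ε : Fin n → ℝ => ∑ j, ((1 / n : ℝ) + ε j) • G j (θ ε))
      (∑ j, (((1 / n : ℝ) + (0 : Fin n → ℝ) j) • ((fderiv ℝ (G j) θs).comp D)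
        + (ContinuousLinearMap.proj j : (Fin n → ℝ) →L[ℝ] ℝ).smulRight (G j (θ 0)))) 0 :=
    HasFDerivAt.fun_sum fun j _ => hterm j
  -- the function is eventually 0, so its derivative is 0
  have hzero : (∑ j, (((1 / n : ℝ) + (0 : Fin n → ℝ) j) • ((fderiv ℝ (G j) θs).comp D)
        + (ContinuousLinearMap.proj j : (Fin n → ℝ) →L[ℝ] ℝ).smulRight (G j (θ 0))))
      = (0 : (Fin n → ℝ) →L[ℝ] E) := by
    have heq : (fun ε : Fin n → ℝ => ∑ j, ((1 / n : ℝ) + ε j) • G j (θ ε))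
        =ᶠ[nhds (0 : Fin n → ℝ)] (fun _ => (0 : E)) := hcrit
    rw [← hg.fderiv, heq.fderiv_eq, fderiv_fun_const]
    rfl
  -- apply to the direction `v`
  have hΦv : ∑ j, ((1 / n : ℝ) • fderiv ℝ (G j) θs (D v) + v j • G j θs) = 0 := by
    have := congrArg (fun (T : (Fin n → ℝ) →L[ℝ] E) => T v) hzero
    simpa [ContinuousLinearMap.sum_apply, ContinuousLinearMap.add_apply,
      ContinuousLinearMap.smul_apply, ContinuousLinearMap.comp_apply,
      ContinuousLinearMap.smulRight_apply, ContinuousLinearMap.proj_apply, hθ0] using this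
  have hsingle : ∑ j, v j • G j θs = G i θs := by
    rw [hv]
    rw [Finset.sum_eq_single i]
    · simp
    · intro j _ hj; simp [Pi.single_eq_of_ne hj]
    · intro h; exact absurd (Finset.mem_univ i) h
  have hHDv : H (D v) + G i θs = 0 := by
    have h1 : (H : E →L[ℝ] E) (D v) = ∑ j, (1 / n : ℝ) • fderiv ℝ (G j) θs (D v) := by
      rw [hH']
      simp [ContinuousLinearMap.smul_apply, ContinuousLinearMap.sum_apply, Finset.smul_sum]
    have h2 := hΦv
    rw [Finset.sum_add_distrib, hsingle] at h2
    rw [show H (D v) = (H : E →L[ℝ] E) (D v) from rfl, h1]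
    exact h2
  have hDv : D v = -(H.symm (G i θs)) := by
    have h1 : H (D v) = -(G i θs) := by linear_combination (norm := abel) hHDv
    have := congrArg H.symm h1
    rwa [ContinuousLinearEquiv.symm_apply_apply, map_neg] at this
  -- chain rule
  have hfθ0 : DifferentiableAt ℝ f (θ 0) := by rw [hθ0]; exact hf
  have hcomp : fderiv ℝ (fun ε => f (θ ε)) 0 = (fderiv ℝ f θs).comp D := by
    have := fderiv_comp (0 : Fin n → ℝ) hfθ0 hθ
    rw [hθ0] at this
    exact this
  rw [hcomp]
  have hfd : fderiv ℝ f θs (D v) = @inner ℝ E _ (gradient f θs) (D v) := by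
    rw [show gradient f θs = (InnerProductSpace.toDual ℝ E).symm (fderiv ℝ f θs) from rfl,
      InnerProductSpace.toDual_symm_apply]
  rw [ContinuousLinearMap.comp_apply, hfd, hDv, inner_neg_right]
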